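/- There exists a single computable predictor that learns to predict every binary sequence whose n-th symbol can eventually be computed within 2^n steps: there is a computable p : List Bool → Bool such that for every ω : ℕ → Bool, if there exists a code c : Nat.Partrec.Code with Encodable.encode (ω n) ∈ c.eval n for all n, and there exists r such that for all n > r, Nat.Partrec.Code.evaln (2 ^ n) c n = some (Encodable.encode (ω n)), then p learns to predict ω. -/

import Mathlib

open Nat.Partrec (Code)
open Nat.Partrec.Code

/-- The length-`n` prefix `[ω 0, …, ω (n−1)]` of a binary sequence `ω`. -/
def prefixList (ω : ℕ → Bool) (n : ℕ) : List Bool := (List.range n).map ω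

/-- A predictor `p` learns to predict the sequence `ω` if from some point on it
always predicts the next symbol correctly. -/
def LearnsToPredict (p : List Bool → Bool) (ω : ℕ → Bool) : Prop :=
  ∃ m : ℕ, ∀ n ≥ m, p (prefixList ω n) = ω n

/-- Code `k` is eligible given history `l`. -/
def predOK (l : List Bool) (k : ℕ) : Bool :=
  decide ((List.range l.length).map
      (fun i => Nat.Partrec.Code.evaln (2 ^ (l.length + 1)) (Denumerable.ofNat Code k) i)
    = l.map (fun b => some (Encodable.encode b)))
  && (Nat.Partrec.Code.evaln (2 ^ (l.length + 1)) (Denumerable.ofNat Code k) l.length).isSome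

def myP (l : List Bool) : Bool :=
  decide (Nat.Partrec.Code.evaln (2 ^ (l.length + 1))
    (Denumerable.ofNat Code ((List.range (l.length + 1)).findIdx (predOK l))) l.length = some 1)

lemma pow2_prim : Primrec (fun n : ℕ => 2 ^ (n + 1)) :=
  (Primrec₂.unpaired'.mp Nat.Primrec.pow).comp (Primrec.const 2) Primrec.succ

lemma ev_prim : Primrec₂ (fun (p : List Bool × ℕ) (i : ℕ) =>
    Nat.Partrec.Code.evaln (2 ^ (p.1.length + 1)) (Denumerable.ofNat Code p.2) i) := by
  have h : Primrec (fun x : (List Bool × ℕ) × ℕ =>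
      ((2 ^ (x.1.1.length + 1), Denumerable.ofNat Code x.1.2), x.2)) :=
    ((pow2_prim.comp (Primrec.list_length.comp (Primrec.fst.comp Primrec.fst))).pair
      ((Primrec.ofNat Code).comp (Primrec.snd.comp Primrec.fst))).pair Primrec.snd
  exact Nat.Partrec.Code.primrec_evaln.comp h

lemma predOK_prim : Primrec₂ predOK := by
  have h1 : Primrec (fun p : List Bool × ℕ => (List.range p.1.length).map
      (fun i => Nat.Partrec.Code.evaln (2 ^ (p.1.length + 1)) (Denumerable.ofNat Code p.2) i)) :=
    Primrec.list_map (Primrec.list_range.comp (Primrec.list_length.comp Primrec.fst)) ev_prim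
  have h2 : Primrec (fun p : List Bool × ℕ => p.1.map (fun b => some (Encodable.encode b))) :=
    Primrec.list_map Primrec.fst
      ((Primrec.option_some.comp Primrec.encode).comp₂ Primrec₂.right)
  have h3 : Primrec (fun p : List Bool × ℕ => Nat.Partrec.Code.evaln (2 ^ (p.1.length + 1))
      (Denumerable.ofNat Code p.2) p.1.length) :=
    ev_prim.comp Primrec.id (Primrec.list_length.comp Primrec.fst)
  exact (Primrec.dom_bool₂ (· && ·)).comp (Primrec.eq.comp h1 h2).decide
    (Primrec.option_isSome.comp h3)

lemma myP_prim : Primrec myP := by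
  have hidx : Primrec (fun l : List Bool => (List.range (l.length + 1)).findIdx (predOK l)) :=
    Primrec.list_findIdx (Primrec.list_range.comp (Primrec.succ.comp Primrec.list_length))
      predOK_prim
  have hev : Primrec (fun l : List Bool => Nat.Partrec.Code.evaln (2 ^ (l.length + 1))
      (Denumerable.ofNat Code ((List.range (l.length + 1)).findIdx (predOK l))) l.length) :=
    ev_prim.comp (Primrec.id.pair hidx) Primrec.list_length
  exact (Primrec.eq.comp hev (Primrec.const (some 1))).decide

/-- Eligibility of code `k` at stage `n`. -/
def Elig (ω : ℕ → Bool) (k n : ℕ) : Prop :=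
  (∀ i < n, Nat.Partrec.Code.evaln (2 ^ (n + 1)) (Denumerable.ofNat Code k) i
      = some (Encodable.encode (ω i)))
  ∧ (Nat.Partrec.Code.evaln (2 ^ (n + 1)) (Denumerable.ofNat Code k) n).isSome

lemma prefixList_length (ω : ℕ → Bool) (n : ℕ) : (prefixList ω n).length = n := by
  simp [prefixList]

lemma predOK_iff (ω : ℕ → Bool) (n k : ℕ) :
    predOK (prefixList ω n) k = true ↔ Elig ω k n := by
  rw [predOK, Bool.and_eq_true, decide_eq_true_iff, prefixList_length, prefixList,
    List.map_map, List.map_eq_map_iff]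
  constructor
  · rintro ⟨h1, h2⟩
    exact ⟨fun i hi => h1 i (List.mem_range.mpr hi), h2⟩
  · rintro ⟨h1, h2⟩
    exact ⟨fun i hi => h1 i (List.mem_range.mp hi), h2⟩

/-- A single computable predictor learns every binary sequence whose `n`-th
symbol can eventually be computed within `2 ^ n` steps. -/
theorem stmt_10 :
    ∃ p : List Bool → Bool, Computable p ∧
      ∀ ω : ℕ → Bool,
        (∃ c : Nat.Partrec.Code,
            (∀ n : ℕ, Encodable.encode (ω n) ∈ c.eval n) ∧
            ∃ r : ℕ, ∀ n > r,
              Nat.Partrec.Code.evaln (2 ^ n) c n =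
                some (Encodable.encode (ω n))) →
        LearnsToPredict p ω := by
  refine ⟨myP, myP_prim.to_comp, ?_⟩
  rintro ω ⟨c, hc, r, hr⟩
  set K := Encodable.encode c with hKdef
  have hK : Denumerable.ofNat Code K = c := Denumerable.ofNat_encode c
  -- halting time bounds for early positions
  have hex : ∀ i, ∃ t, Encodable.encode (ω i) ∈ Nat.Partrec.Code.evaln t c i :=
    fun i => evaln_complete.mp (hc i)
  choose t ht using hex
  set T := (Finset.range (r + 1)).sup t with hT
  -- true code eventually eligible
  have hKelig : ∀ n, max (r + 1) T ≤ n → Elig ω K n := by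
    intro n hn
    have hle : ∀ i ≤ n, 2 ^ i ≤ 2 ^ (n + 1) := fun i hi =>
      Nat.pow_le_pow_right (by norm_num) (le_trans hi (Nat.le_succ n))
    have hrn : r < n := lt_of_lt_of_le (Nat.lt_of_lt_of_le (Nat.lt_succ_self r)
      (le_max_left _ _)) hn
    constructor
    · intro i hi
      rw [hK]
      by_cases hir : i ≤ r
      · have hti : t i ≤ T := Finset.le_sup (Finset.mem_range.mpr (Nat.lt_succ_of_le hir))
        have h2 : t i ≤ 2 ^ (n + 1) := le_trans hti (le_trans (le_max_right _ _)
          (le_trans hn (le_of_lt (Nat.lt_of_lt_of_le (Nat.lt_two_pow_self (n := n))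
            (hle n le_rfl)))))
        exact evaln_mono h2 (ht i)
      · have := hr i (lt_of_not_ge hir)
        exact evaln_mono (hle i (le_of_lt hi)) this
    · rw [hK]
      have := hr n hrn
      rw [evaln_mono (hle n le_rfl) this]
      rfl
  -- at most one wrong prediction per code
  have hW : ∀ k n n', n < n' →
      (Elig ω k n ∧ Nat.Partrec.Code.evaln (2 ^ (n + 1)) (Denumerable.ofNat Code k) n
        ≠ some (Encodable.encode (ω n))) → ¬ Elig ω k n' := by
    rintro k n n' hnn' ⟨⟨_, hsome⟩, hwrong⟩ ⟨h1', _⟩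
    obtain ⟨v, hv⟩ := Option.isSome_iff_exists.mp hsome
    have hmono : Nat.Partrec.Code.evaln (2 ^ (n' + 1)) (Denumerable.ofNat Code k) n = some v :=
      evaln_mono (Nat.pow_le_pow_right (by norm_num) (Nat.succ_le_succ (le_of_lt hnn'))) hv
    have := h1' n hnn'
    rw [this] at hmono
    exact hwrong (hv.trans (by rw [Option.some_inj] at hmono; rw [hmono]))
  classical
  -- bound on the unique wrong stage of code k
  let W : ℕ → ℕ → Prop := fun k n =>
    Elig ω k n ∧ Nat.Partrec.Code.evaln (2 ^ (n + 1)) (Denumerable.ofNat Code k) n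
      ≠ some (Encodable.encode (ω n))
  have hWsub : ∀ k n n', W k n → W k n' → n = n' := by
    intro k n n' h h'
    rcases lt_trichotomy n n' with hlt | heq | hgt
    · exact absurd h'.1 (hW k n n' hlt h)
    · exact heq
    · exact absurd h.1 (hW k n' n hgt h')
  let b : ℕ → ℕ := fun k => if h : ∃ n, W k n then h.choose else 0
  have hb : ∀ k n, W k n → n ≤ b k := by
    intro k n h
    have hex : ∃ n, W k n := ⟨n, h⟩
    have := hWsub k n hex.choose h hex.choose_spec
    simp only [b, dif_pos hex]
    omega
  set B := (Finset.range (K + 1)).sup b with hB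
  refine ⟨max (max (max (r + 1) T) K) (B + 1), ?_⟩
  intro n hn
  have hN : max (r + 1) T ≤ n := le_trans (le_max_left _ _) (le_trans (le_max_left _ _) hn)
  have hKn : K ≤ n := le_trans (le_max_right _ _) (le_trans (le_max_left _ _) hn)
  have hBn : B < n := lt_of_lt_of_le (Nat.lt_succ_self B) (le_trans (le_max_right _ _) hn)
  set l := prefixList ω n with hl
  have hlen : l.length = n := prefixList_length ω n
  have hKok : predOK l K = true := (predOK_iff ω n K).mpr (hKelig n hN)
  set j := (List.range (n + 1)).findIdx (predOK l) with hj
  have hexists : ∃ x ∈ List.range (n + 1), predOK l x = true :=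
    ⟨K, List.mem_range.mpr (Nat.lt_succ_of_le hKn), hKok⟩
  have hjlt : j < n + 1 := by
    have := List.findIdx_lt_length_of_exists hexists
    simpa using this
  have hjok : predOK l j = true := by
    have h := @List.findIdx_getElem _ (predOK l) (List.range (n + 1)) (by simpa using hjlt)
    simpa using h
  have hjK : j ≤ K := by
    by_contra hgt
    push_neg at hgt
    have hKlt : K < j := hgt
    have := List.not_of_lt_findIdx (xs := List.range (n + 1)) (p := predOK l)
      (i := K) hKlt
    simp only [List.getElem_range] at this
    rw [hKok] at this
    exact absurd this (by simp)
  have hjelig : Elig ω j n := (predOK_iff ω n j).mp hjok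
  -- the chosen code predicts correctly at stage n
  have hcorrect : Nat.Partrec.Code.evaln (2 ^ (n + 1)) (Denumerable.ofNat Code j) n
      = some (Encodable.encode (ω n)) := by
    by_contra hwrong
    have hWjn : W j n := ⟨hjelig, hwrong⟩
    have : n ≤ b j := hb j n hWjn
    have : b j ≤ B := Finset.le_sup (Finset.mem_range.mpr (Nat.lt_succ_of_le hjK))
    omega
  -- conclude
  show myP l = ω n
  rw [myP, hlen]
  rw [← hj, hcorrect]
  cases hωn : ω n <;> simp [hωn, Encodable.encode_true, Encodable.encode_false]
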